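/- Let f : ℝⁿ → ℝⁿ be Lipschitz and let u : [0,∞) → ℝⁿ be continuous with u(t) → 0 as t → ∞. If x : [0,∞) → ℝⁿ is a bounded solution of ẋ = f(x) + u(t), and the system ẋ = f(x) has x* = 0 globally asymptotically stable with a C¹ Lyapunov function V satisfying b₁‖x‖² ≤ V(x) ≤ b₂‖x‖², ∇V·f ≤ -b₃‖x‖², ‖∇V‖ ≤ b₄‖x‖ (b₁,…,b₄ > 0), and in addition ‖u(t)‖ ≤ c·e^{-δt} for some c, δ > 0, then x(t) → 0 as t → ∞. -/

import Mathlib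

open Real Filter

/-- Converging-input converging-state property underlying Theorem 1: a globally
exponentially stable system (witnessed by a quadratic-type Lyapunov function with
linearly bounded gradient) driven by an exponentially decaying input has all bounded
solutions converging to the origin. -/
theorem stmt19 {n : ℕ} (f : EuclideanSpace ℝ (Fin n) → EuclideanSpace ℝ (Fin n))
    (Lf : NNReal) (hf : LipschitzWith Lf f) (hf0 : f 0 = 0)
    (u : ℝ → EuclideanSpace ℝ (Fin n)) (hu : Continuous u)
    (hu0 : Filter.Tendsto u atTop (nhds 0))
    (c δ : ℝ) (hcp : 0 < c) (hδ : 0 < δ)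
    (hud : ∀ t, 0 ≤ t → ‖u t‖ ≤ c * Real.exp (-δ * t))
    (V : EuclideanSpace ℝ (Fin n) → ℝ) (hV : ContDiff ℝ 1 V)
    (b₁ b₂ b₃ b₄ : ℝ) (hb₁ : 0 < b₁) (hb₂ : 0 < b₂) (hb₃ : 0 < b₃) (hb₄ : 0 < b₄)
    (hVbound : ∀ x, b₁ * ‖x‖ ^ 2 ≤ V x ∧ V x ≤ b₂ * ‖x‖ ^ 2)
    (hVder : ∀ x, fderiv ℝ V x (f x) ≤ -b₃ * ‖x‖ ^ 2)
    (hVgrad : ∀ x, ‖fderiv ℝ V x‖ ≤ b₄ * ‖x‖)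
    (x : ℝ → EuclideanSpace ℝ (Fin n))
    (hx : ∀ t, 0 ≤ t → HasDerivAt x (f (x t) + u t) t)
    (hxbdd : ∃ M : ℝ, ∀ t, 0 ≤ t → ‖x t‖ ≤ M) :
    Filter.Tendsto x atTop (nhds 0) := by
  obtain ⟨M, hM⟩ := hxbdd
  have hM0 : 0 ≤ M := le_trans (norm_nonneg _) (hM 0 le_rfl)
  set α : ℝ := min (b₃ / b₂) δ / 2 with hαdef
  have hα0 : 0 < α := by
    have : 0 < min (b₃ / b₂) δ := lt_min (by positivity) hδ
    positivity
  have hαδ : α < δ := by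
    have h1 : min (b₃ / b₂) δ ≤ δ := min_le_right _ _
    have : α ≤ δ / 2 := by rw [hαdef]; linarith
    linarith
  have hαb : α ≤ b₃ / b₂ := by
    have h1 : min (b₃ / b₂) δ ≤ b₃ / b₂ := min_le_left _ _
    have h2 : 0 < min (b₃ / b₂) δ := lt_min (by positivity) hδ
    rw [hαdef]; linarith
  set β : ℝ := δ - α with hβdef
  have hβ0 : 0 < β := sub_pos.mpr hαδ
  set K : ℝ := b₄ * M * c with hKdef
  have hK0 : 0 ≤ K := by positivity
  have hVdiff : Differentiable ℝ V := hV.differentiable one_ne_zero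
  have hVnn : ∀ y, 0 ≤ V y := fun y =>
    le_trans (by positivity) (hVbound y).1
  set g : ℝ → ℝ := fun t => Real.exp (α * t) * V (x t) + (K / β) * Real.exp (-β * t)
    with hgdef
  have hgderiv : ∀ t, 0 ≤ t → HasDerivAt g
      (Real.exp (α * t) * α * V (x t)
        + Real.exp (α * t) * (fderiv ℝ V (x t) (f (x t) + u t))
        + (K / β) * (Real.exp (-β * t) * (-β))) t := by
    intro t ht
    have h1 : HasDerivAt (fun s => Real.exp (α * s)) (Real.exp (α * t) * α) t := by
      simpa using ((hasDerivAt_id t).const_mul α).exp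
    have h2 : HasDerivAt (fun s => V (x s)) (fderiv ℝ V (x t) (f (x t) + u t)) t :=
      (hVdiff (x t)).hasFDerivAt.comp_hasDerivAt t (hx t ht)
    have h3 : HasDerivAt (fun s => Real.exp (-β * s)) (Real.exp (-β * t) * (-β)) t := by
      simpa using ((hasDerivAt_id t).const_mul (-β)).exp
    exact (h1.mul h2).add (h3.const_mul (K / β))
  have hxcont : ContinuousOn x (Set.Ici 0) := fun t ht =>
    (hx t ht).continuousAt.continuousWithinAt
  have hderiv_le : ∀ t, 0 ≤ t →
      Real.exp (α * t) * α * V (x t)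
        + Real.exp (α * t) * (fderiv ℝ V (x t) (f (x t) + u t))
        + (K / β) * (Real.exp (-β * t) * (-β)) ≤ 0 := by
    intro t ht
    have hmap : fderiv ℝ V (x t) (f (x t) + u t)
        = fderiv ℝ V (x t) (f (x t)) + fderiv ℝ V (x t) (u t) := map_add _ _ _
    have hD1 : fderiv ℝ V (x t) (f (x t)) ≤ -b₃ * ‖x t‖ ^ 2 := hVder _
    have hD2 : fderiv ℝ V (x t) (u t) ≤ K * Real.exp (-δ * t) := by
      have h1 : fderiv ℝ V (x t) (u t) ≤ ‖fderiv ℝ V (x t)‖ * ‖u t‖ :=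
        le_trans (le_abs_self _) ((fderiv ℝ V (x t)).le_opNorm (u t))
      have h2 : ‖fderiv ℝ V (x t)‖ * ‖u t‖ ≤ (b₄ * ‖x t‖) * (c * Real.exp (-δ * t)) :=
        mul_le_mul (hVgrad _) (hud t ht) (norm_nonneg _) (by positivity)
      have h3 : (b₄ * ‖x t‖) * (c * Real.exp (-δ * t)) ≤ K * Real.exp (-δ * t) := by
        have : b₄ * ‖x t‖ ≤ b₄ * M := by
          exact mul_le_mul_of_nonneg_left (hM t ht) hb₄.le
        calc (b₄ * ‖x t‖) * (c * Real.exp (-δ * t))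
            ≤ (b₄ * M) * (c * Real.exp (-δ * t)) :=
              mul_le_mul_of_nonneg_right this (by positivity)
          _ = K * Real.exp (-δ * t) := by rw [hKdef]; ring
      linarith
    have hαV : α * V (x t) ≤ b₃ * ‖x t‖ ^ 2 := by
      have h1 : α * V (x t) ≤ (b₃ / b₂) * V (x t) :=
        mul_le_mul_of_nonneg_right hαb (hVnn _)
      have h2 : (b₃ / b₂) * V (x t) ≤ (b₃ / b₂) * (b₂ * ‖x t‖ ^ 2) :=
        mul_le_mul_of_nonneg_left (hVbound (x t)).2 (by positivity)
      have h3 : (b₃ / b₂) * (b₂ * ‖x t‖ ^ 2) = b₃ * ‖x t‖ ^ 2 := by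
        field_simp
      linarith
    have hsum : α * V (x t) + fderiv ℝ V (x t) (f (x t) + u t)
        ≤ K * Real.exp (-δ * t) := by
      rw [hmap]; linarith
    have hexp : Real.exp (α * t) * (K * Real.exp (-δ * t)) = K * Real.exp (-β * t) := by
      rw [mul_comm (Real.exp (α * t)) _, mul_assoc, ← Real.exp_add]
      congr 2
      rw [hβdef]; ring
    have hemul : Real.exp (α * t) * (α * V (x t) + fderiv ℝ V (x t) (f (x t) + u t))
        ≤ K * Real.exp (-β * t) := by
      calc Real.exp (α * t) * (α * V (x t) + fderiv ℝ V (x t) (f (x t) + u t))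
          ≤ Real.exp (α * t) * (K * Real.exp (-δ * t)) :=
            mul_le_mul_of_nonneg_left hsum (Real.exp_nonneg _)
        _ = K * Real.exp (-β * t) := hexp
    have hKβ : (K / β) * (Real.exp (-β * t) * (-β)) = -(K * Real.exp (-β * t)) := by
      field_simp
    nlinarith [hemul, hKβ]
  have hganti : AntitoneOn g (Set.Ici (0 : ℝ)) := by
    apply antitoneOn_of_deriv_nonpos (convex_Ici 0)
    · apply ContinuousOn.add
      · exact (Real.continuous_exp.comp (continuous_const.mul continuous_id)).continuousOn.mul
          (hV.continuous.comp_continuousOn hxcont)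
      · exact (continuous_const.mul
          (Real.continuous_exp.comp (continuous_const.mul continuous_id))).continuousOn
    · intro t ht
      rw [interior_Ici] at ht
      exact ((hgderiv t (le_of_lt ht)).differentiableAt).differentiableWithinAt
    · intro t ht
      rw [interior_Ici] at ht
      rw [(hgderiv t (le_of_lt ht)).deriv]
      exact hderiv_le t (le_of_lt ht)
  set C : ℝ := V (x 0) + K / β with hCdef
  have hgC : ∀ t, 0 ≤ t → Real.exp (α * t) * V (x t) ≤ C := by
    intro t ht
    have h1 : g t ≤ g 0 := hganti (Set.self_mem_Ici) ht ht
    have h2 : g 0 = C := by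
      rw [hgdef, hCdef]; simp
    have h3 : 0 ≤ (K / β) * Real.exp (-β * t) := by positivity
    have h4 : g t = Real.exp (α * t) * V (x t) + (K / β) * Real.exp (-β * t) := rfl
    rw [h2, h4] at h1
    exact le_trans (le_add_of_nonneg_right h3) h1
  have hnormsq : ∀ t, 0 ≤ t → ‖x t‖ ^ 2 ≤ (C / b₁) * Real.exp (-α * t) := by
    intro t ht
    have h1 : b₁ * ‖x t‖ ^ 2 ≤ V (x t) := (hVbound (x t)).1
    have h2 : V (x t) ≤ C * Real.exp (-α * t) := by
      have hgt := hgC t ht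
      have h6 : V (x t) = Real.exp (α * t) * V (x t) * Real.exp (-α * t) := by
        rw [mul_comm (Real.exp (α * t)) _, mul_assoc, ← Real.exp_add]
        have he : α * t + -α * t = 0 := by ring
        rw [he, Real.exp_zero, mul_one]
      rw [h6]
      exact mul_le_mul_of_nonneg_right hgt (Real.exp_nonneg _)
    rw [div_mul_eq_mul_div, le_div_iff₀ hb₁]
    calc ‖x t‖ ^ 2 * b₁ = b₁ * ‖x t‖ ^ 2 := by ring
      _ ≤ V (x t) := h1
      _ ≤ C * Real.exp (-α * t) := h2
  have hbound_tendsto : Tendsto (fun t => (C / b₁) * Real.exp (-α * t)) atTop (nhds 0) := by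
    have h1 : Tendsto (fun t : ℝ => -α * t) atTop atBot := by
      apply Tendsto.const_mul_atTop_of_neg (neg_neg_iff_pos.mpr hα0) tendsto_id
    have h2 : Tendsto (fun t : ℝ => Real.exp (-α * t)) atTop (nhds 0) :=
      Real.tendsto_exp_atBot.comp h1
    simpa using h2.const_mul (C / b₁)
  have hsq : Tendsto (fun t => ‖x t‖ ^ 2) atTop (nhds 0) := by
    apply squeeze_zero' (g := fun t => (C / b₁) * Real.exp (-α * t))
    · filter_upwards [eventually_ge_atTop (0:ℝ)] with t ht
      positivity
    · filter_upwards [eventually_ge_atTop (0:ℝ)] with t ht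
      exact hnormsq t ht
    · exact hbound_tendsto
  have hnorm : Tendsto (fun t => ‖x t‖) atTop (nhds 0) := by
    have := hsq.sqrt
    simp only [Real.sqrt_zero] at this
    convert this using 2 with t
    rw [Real.sqrt_sq (norm_nonneg _)]
  exact tendsto_zero_iff_norm_tendsto_zero.mpr hnorm
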